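/- Let Q be a G-equivariant symmetry on H and let B_Q = { M Q M* + K : M ∈ L(H) invertible and G-equivariant, K ∈ L(H) compact, selfadjoint and G-equivariant }. Then B_Q is both open and closed in the set FS^i(H)^G of all G-equivariant selfadjoint Fredholm operators whose essential spectrum meets both (−∞,0) and (0,∞), equipped with the subspace topology of the operator norm topology; consequently B_Q is a union of connected components of FS^i(H)^G. -/

import Mathlib

set_option linter.unusedSectionVars false
set_option linter.unusedVariables false
set_option maxHeartbeats 1000000
set_option synthInstance.maxHeartbeats 400000
open ContinuousLinearMap


open scoped RealInnerProductSpace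

/-- A bounded selfadjoint operator is Fredholm iff its kernel is finite-dimensional
and its range is closed. -/
def IsFredholmOp {H : Type*} [NormedAddCommGroup H] [InnerProductSpace ℝ H]
    (T : H →L[ℝ] H) : Prop :=
  FiniteDimensional ℝ (LinearMap.ker (T : H →ₗ[ℝ] H)) ∧ IsClosed (LinearMap.range (T : H →ₗ[ℝ] H) : Set H)

/-- The essential spectrum of a bounded selfadjoint operator: the set of real `μ` such that
`μ - T` is not Fredholm. -/
def essSpectrum {H : Type*} [NormedAddCommGroup H] [InnerProductSpace ℝ H]
    (T : H →L[ℝ] H) : Set ℝ :=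
  {μ : ℝ | ¬ IsFredholmOp (μ • (1 : H →L[ℝ] H) - T)}

/-- Equivariance of a bounded operator with respect to an orthogonal representation `ρ`. -/
def IsEquivariant {H : Type*} [NormedAddCommGroup H] [InnerProductSpace ℝ H]
    {G : Type*} [Group G] (ρ : G →* (H ≃ₗᵢ[ℝ] H)) (T : H →L[ℝ] H) : Prop :=
  ∀ (g : G) (u : H), T (ρ g u) = ρ g (T u)

/-- The set of operators of the form `M Q M* + K` with `M` invertible and `G`-equivariant and
`K` compact, selfadjoint and `G`-equivariant. -/
def cogredientOrbit {H : Type*} [NormedAddCommGroup H] [InnerProductSpace ℝ H] [CompleteSpace H]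
    {G : Type*} [Group G] (ρ : G →* (H ≃ₗᵢ[ℝ] H)) (Q : H →L[ℝ] H) : Set (H →L[ℝ] H) :=
  {T | ∃ M K : H →L[ℝ] H, IsUnit M ∧ IsEquivariant ρ M ∧
    IsCompactOperator ⇑K ∧ IsSelfAdjoint K ∧ IsEquivariant ρ K ∧
    T = M * Q * ContinuousLinearMap.adjoint M + K}

/-- The set `FS^i(H)^G` of `G`-equivariant selfadjoint Fredholm operators whose essential
spectrum meets both `(-∞,0)` and `(0,∞)`. -/
def FSiG {H : Type*} [NormedAddCommGroup H] [InnerProductSpace ℝ H] [CompleteSpace H]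
    {G : Type*} [Group G] (ρ : G →* (H ≃ₗᵢ[ℝ] H)) : Set (H →L[ℝ] H) :=
  {T | IsSelfAdjoint T ∧ IsEquivariant ρ T ∧ IsFredholmOp T ∧
    (essSpectrum T ∩ Set.Iio (0:ℝ)).Nonempty ∧ (essSpectrum T ∩ Set.Ioi (0:ℝ)).Nonempty}



section AuxAll
variable {H : Type*} [NormedAddCommGroup H] [InnerProductSpace ℝ H] [CompleteSpace H]
variable {G : Type*} [Group G] {ρ : G →* (H ≃ₗᵢ[ℝ] H)}

namespace IsEquivariant

lemma one : IsEquivariant ρ (1 : H →L[ℝ] H) := fun g u => rfl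

lemma zero : IsEquivariant ρ (0 : H →L[ℝ] H) := by
  intro g u; simp

lemma add {T S : H →L[ℝ] H} (hT : IsEquivariant ρ T) (hS : IsEquivariant ρ S) :
    IsEquivariant ρ (T + S) := by
  intro g u; simp [hT g u, hS g u]

lemma sub {T S : H →L[ℝ] H} (hT : IsEquivariant ρ T) (hS : IsEquivariant ρ S) :
    IsEquivariant ρ (T - S) := by
  intro g u; simp [hT g u, hS g u]

lemma neg {T : H →L[ℝ] H} (hT : IsEquivariant ρ T) : IsEquivariant ρ (-T) := by
  intro g u; simp [hT g u]

lemma mul {T S : H →L[ℝ] H} (hT : IsEquivariant ρ T) (hS : IsEquivariant ρ S) :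
    IsEquivariant ρ (T * S) := by
  intro g u
  simp only [ContinuousLinearMap.mul_apply, hS g u, hT g _]

lemma smul {T : H →L[ℝ] H} (c : ℝ) (hT : IsEquivariant ρ T) : IsEquivariant ρ (c • T) := by
  intro g u; simp [hT g u]

lemma inv {M : H →L[ℝ] H} (hM : IsUnit M) (hMe : IsEquivariant ρ M) :
    IsEquivariant ρ (↑hM.unit⁻¹ : H →L[ℝ] H) := by
  have key : ∀ x, M ((↑hM.unit⁻¹ : H →L[ℝ] H) x) = x := by
    intro x
    calc M ((↑hM.unit⁻¹ : H →L[ℝ] H) x)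
        = ((↑hM.unit * ↑hM.unit⁻¹ : H →L[ℝ] H)) x := by
          rw [hM.unit_spec]; rfl
      _ = x := by rw [hM.unit.mul_inv]; rfl
  have key' : ∀ x, (↑hM.unit⁻¹ : H →L[ℝ] H) (M x) = x := by
    intro x
    calc (↑hM.unit⁻¹ : H →L[ℝ] H) (M x)
        = ((↑hM.unit⁻¹ * ↑hM.unit : H →L[ℝ] H)) x := by
          rw [hM.unit_spec]; rfl
      _ = x := by rw [hM.unit.inv_mul]; rfl
  intro g u
  have h2 : M (ρ g ((↑hM.unit⁻¹ : H →L[ℝ] H) u)) = ρ g u := by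
    rw [hMe g, key]
  calc (↑hM.unit⁻¹ : H →L[ℝ] H) (ρ g u)
      = (↑hM.unit⁻¹ : H →L[ℝ] H) (M (ρ g ((↑hM.unit⁻¹ : H →L[ℝ] H) u))) := by rw [h2]
    _ = ρ g ((↑hM.unit⁻¹ : H →L[ℝ] H) u) := key' _

/-- inner product identity for the representation -/
lemma _root_.rho_apply_inv_apply (g : G) (b : H) : ρ g (ρ g⁻¹ b) = b := by
  have h : ρ g * ρ g⁻¹ = 1 := by rw [← map_mul]; simp
  calc ρ g (ρ g⁻¹ b) = (ρ g * ρ g⁻¹) b := by rw [LinearIsometryEquiv.coe_mul]; rfl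
    _ = b := by rw [h, LinearIsometryEquiv.coe_one]; rfl

/-- inner product identity for the representation -/
lemma _root_.rho_inner_left (g : G) (a b : H) : ⟪ρ g a, b⟫ = ⟪a, ρ g⁻¹ b⟫ := by
  calc ⟪ρ g a, b⟫ = ⟪ρ g a, ρ g (ρ g⁻¹ b)⟫ := by rw [rho_apply_inv_apply]
    _ = ⟪a, ρ g⁻¹ b⟫ := (ρ g).inner_map_map a (ρ g⁻¹ b)

lemma adjoint {M : H →L[ℝ] H} (hMe : IsEquivariant ρ M) :
    IsEquivariant ρ (ContinuousLinearMap.adjoint M) := by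
  intro g u
  apply ext_inner_right ℝ
  intro v
  rw [ContinuousLinearMap.adjoint_inner_left]
  rw [rho_inner_left (ρ := ρ) g u (M v)]
  rw [rho_inner_left (ρ := ρ) g (ContinuousLinearMap.adjoint M u) v]
  rw [← hMe g⁻¹ v, ContinuousLinearMap.adjoint_inner_left]

lemma of_tendsto {T : H →L[ℝ] H} {s : ℕ → H →L[ℝ] H} (hs : ∀ n, IsEquivariant ρ (s n))
    (h : Filter.Tendsto s Filter.atTop (nhds T)) : IsEquivariant ρ T := by
  intro g u
  have happ : ∀ x : H, Filter.Tendsto (fun n => (s n) x) Filter.atTop (nhds (T x)) := by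
    intro x
    exact ((ContinuousLinearMap.apply ℝ H x).continuous.tendsto T).comp h
  have h1 : Filter.Tendsto (fun n => (s n) (ρ g u)) Filter.atTop (nhds (T (ρ g u))) :=
    happ _
  have h2 : Filter.Tendsto (fun n => (s n) (ρ g u)) Filter.atTop (nhds (ρ g (T u))) := by
    have h3 : Filter.Tendsto (fun n => (s n) u) Filter.atTop (nhds (T u)) := happ u
    have := ((ρ g).continuous.tendsto (T u)).comp h3
    simpa [Function.comp_def, fun n => hs n g u] using this
  exact tendsto_nhds_unique h1 h2

end IsEquivariant

private noncomputable def sqrtSeq (t : H →L[ℝ] H) : ℕ → H →L[ℝ] H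
  | 0 => 0
  | n+1 => (2⁻¹ : ℝ) • (t + sqrtSeq t n * sqrtSeq t n)

/-- Square root of `1 - t` for `‖t‖ < 1`, by the quadratic iteration. -/
lemma exists_sqrt (ρ : G →* (H ≃ₗᵢ[ℝ] H)) (t : H →L[ℝ] H) (ht : ‖t‖ < 1) :
    ∃ y : H →L[ℝ] H, y * y = 1 - t ∧ ‖1 - y‖ ≤ ‖t‖ ∧
      (∀ z, z * t = t * z → z * y = y * z) ∧
      (IsSelfAdjoint t → IsSelfAdjoint y) ∧
      (IsEquivariant ρ t → IsEquivariant ρ y) := by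
  set s : ℕ → H →L[ℝ] H := sqrtSeq t with hs_def
  have hs0 : s 0 = 0 := rfl
  have hsS : ∀ n, s (n + 1) = (2⁻¹ : ℝ) • (t + s n * s n) := fun n => rfl
  have hns : ∀ (x : H →L[ℝ] H), ‖(2⁻¹ : ℝ) • x‖ = 2⁻¹ * ‖x‖ := by
    intro x
    rw [norm_smul (2⁻¹ : ℝ) x, Real.norm_eq_abs]
    norm_num
  have hb : ∀ n, ‖s n‖ ≤ ‖t‖ := by
    intro n
    induction n with
    | zero => simp [hs0]
    | succ n ih =>
      rw [hsS, hns]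
      have h1 : ‖t + s n * s n‖ ≤ ‖t‖ + ‖s n‖ * ‖s n‖ :=
        (norm_add_le _ _).trans (add_le_add_right (norm_mul_le _ _) _)
      nlinarith [norm_nonneg (s n), norm_nonneg t, ht.le]
  have hd : ∀ n, ‖s (n + 1) - s n‖ ≤ ‖t‖ / 2 * ‖t‖ ^ n := by
    intro n
    induction n with
    | zero =>
      rw [hsS, hs0, sub_zero, mul_zero, add_zero, hns, pow_zero, mul_one]
      linarith
    | succ n ih =>
      have key : s (n + 1 + 1) - s (n + 1)
          = (2⁻¹ : ℝ) • (s (n+1) * (s (n+1) - s n) + (s (n+1) - s n) * s n) := by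
        have e1 : s (n + 1 + 1) - s (n + 1) = (2⁻¹ : ℝ) • (s (n+1) * s (n+1) - s n * s n) := by
          rw [hsS (n+1), hsS n, ← smul_sub]
          congr 1
          abel
        rw [e1]
        congr 1
        generalize s (n+1) = a
        generalize s n = b
        noncomm_ring
      rw [key, hns]
      have h1 : ‖s (n+1) * (s (n+1) - s n) + (s (n+1) - s n) * s n‖
          ≤ ‖s (n+1)‖ * ‖s (n+1) - s n‖ + ‖s (n+1) - s n‖ * ‖s n‖ :=
        (norm_add_le _ _).trans (add_le_add (norm_mul_le _ _) (norm_mul_le _ _))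
      have h2 : ‖s (n+1)‖ * ‖s (n+1) - s n‖ ≤ ‖t‖ * (‖t‖ / 2 * ‖t‖ ^ n) :=
        mul_le_mul (hb _) ih (norm_nonneg _) (norm_nonneg _)
      have h3 : ‖s (n+1) - s n‖ * ‖s n‖ ≤ (‖t‖ / 2 * ‖t‖ ^ n) * ‖t‖ := by
        refine mul_le_mul ih (hb _) (norm_nonneg _) ?_
        positivity
      have : (2⁻¹ : ℝ) * (‖t‖ * (‖t‖ / 2 * ‖t‖ ^ n) + (‖t‖ / 2 * ‖t‖ ^ n) * ‖t‖)
          = ‖t‖ / 2 * ‖t‖ ^ (n + 1) := by ring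
      nlinarith
  have hcauchy : CauchySeq s := by
    apply cauchySeq_of_le_geometric ‖t‖ (‖t‖ / 2) ht
    intro n
    rw [dist_eq_norm, norm_sub_rev]
    exact hd n
  obtain ⟨l, hl⟩ := cauchySeq_tendsto_of_complete hcauchy
  have hfix : l + l = t + l * l := by
    have h1 : Filter.Tendsto (fun n => s (n + 1)) Filter.atTop (nhds l) :=
      hl.comp (Filter.tendsto_add_atTop_nat 1)
    have h2 : Filter.Tendsto (fun n => (2⁻¹ : ℝ) • (t + s n * s n)) Filter.atTop
        (nhds ((2⁻¹ : ℝ) • (t + l * l))) :=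
      (tendsto_const_nhds.add (hl.mul hl)).const_smul (2⁻¹ : ℝ)
    have h3 : l = (2⁻¹ : ℝ) • (t + l * l) := by
      refine tendsto_nhds_unique h1 ?_
      simpa only [← hsS] using h2
    calc l + l = (2 : ℝ) • l := by rw [two_smul]
      _ = (2 : ℝ) • ((2⁻¹ : ℝ) • (t + l * l)) := by rw [← h3]
      _ = t + l * l := by rw [smul_smul]; norm_num
  refine ⟨1 - l, ?_, ?_, ?_, ?_, ?_⟩
  · have h4 : (1 - l) * (1 - l) = 1 - (l + l) + l * l := by noncomm_ring
    rw [h4, hfix]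
    noncomm_ring
  · have h5 : (1 : H →L[ℝ] H) - (1 - l) = l := by abel
    rw [h5]
    exact le_of_tendsto' hl.norm hb
  · intro z hz
    have hcn : ∀ n, z * s n = s n * z := by
      intro n
      induction n with
      | zero => rw [hs0, mul_zero, zero_mul]
      | succ n ih =>
        rw [hsS, mul_smul_comm, smul_mul_assoc, mul_add, add_mul, hz,
          show z * (s n * s n) = s n * s n * z by
            rw [← mul_assoc, ih, mul_assoc, ih, mul_assoc]]
    have hzl : z * l = l * z := by
      have h1 : Filter.Tendsto (fun n => z * s n) Filter.atTop (nhds (z * l)) :=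
        tendsto_const_nhds.mul hl
      have h2 : Filter.Tendsto (fun n => s n * z) Filter.atTop (nhds (l * z)) :=
        hl.mul tendsto_const_nhds
      refine tendsto_nhds_unique ?_ h2
      simpa only [hcn] using h1
    rw [mul_sub, sub_mul, mul_one, one_mul, hzl]
  · intro hsa
    have hsan : ∀ n, IsSelfAdjoint (s n) := by
      intro n
      induction n with
      | zero =>
        rw [hs0]
        exact IsSelfAdjoint.zero _
      | succ n ih =>
        rw [hsS]
        refine IsSelfAdjoint.smul (star_trivial _) ?_
        refine hsa.add ?_
        show star (s n * s n) = s n * s n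
        rw [star_mul, ih.star_eq]
    have hlsa : IsSelfAdjoint l := by
      have h1 : Filter.Tendsto (fun n => star (s n)) Filter.atTop (nhds (star l)) :=
        (continuous_star.tendsto l).comp hl
      refine tendsto_nhds_unique ?_ hl
      simpa only [fun n => (hsan n).star_eq] using h1
    exact (IsSelfAdjoint.one _).sub hlsa
  · intro heq
    have hen : ∀ n, IsEquivariant ρ (s n) := by
      intro n
      induction n with
      | zero => rw [hs0]; exact IsEquivariant.zero
      | succ n ih => rw [hsS]; exact ((heq.add (ih.mul ih)).smul _)
    exact IsEquivariant.one.sub (IsEquivariant.of_tendsto hen hl)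

lemma norm_one_le' : ‖(1 : H →L[ℝ] H)‖ ≤ 1 := by
  rw [ContinuousLinearMap.one_def]
  exact ContinuousLinearMap.norm_id_le

lemma isUnit_of_norm_one_sub {y : H →L[ℝ] H} (hy : ‖1 - y‖ < 1) : IsUnit y := by
  have h := (Units.oneSub (1 - y) hy).isUnit
  simpa using h

/-- norm of a symmetry is at most one -/
lemma norm_le_one_of_star_mul_self {S : H →L[ℝ] H} (h : star S * S = 1) : ‖S‖ ≤ 1 := by
  have h1 : ‖S‖ * ‖S‖ ≤ 1 := by
    rw [← CStarRing.norm_star_mul_self, h]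
    exact norm_one_le'
  nlinarith [norm_nonneg S]

lemma inv_near_one {y : H →L[ℝ] H} (hy : ‖1 - y‖ < 1) (hu : IsUnit y) :
    ‖(↑hu.unit⁻¹ : H →L[ℝ] H) - 1‖ ≤ ‖1 - y‖ / (1 - ‖1 - y‖) ∧
    ‖(↑hu.unit⁻¹ : H →L[ℝ] H)‖ ≤ (1 - ‖1 - y‖)⁻¹ := by
  set v : H →L[ℝ] H := (↑hu.unit⁻¹ : H →L[ℝ] H) with hv
  have hvy : v * y = 1 := by
    have := hu.unit.inv_mul
    rwa [hu.unit_spec] at this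
  have h1 : v - 1 = v * (1 - y) := by
    rw [mul_sub, mul_one, hvy]
  have h2 : ‖v‖ ≤ 1 + ‖v‖ * ‖1 - y‖ := by
    calc ‖v‖ = ‖1 + (v - 1)‖ := by congr 1; abel
      _ ≤ ‖(1 : H →L[ℝ] H)‖ + ‖v - 1‖ := norm_add_le _ _
      _ ≤ 1 + ‖v‖ * ‖1 - y‖ := by
          refine add_le_add norm_one_le' ?_
          rw [h1]; exact norm_mul_le _ _
  have hq : (0:ℝ) ≤ ‖1 - y‖ := norm_nonneg _
  have hv1 : ‖v‖ ≤ (1 - ‖1 - y‖)⁻¹ := by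
    have hpos : (0:ℝ) < 1 - ‖1 - y‖ := by linarith
    rw [inv_eq_one_div, le_div_iff₀ hpos]
    nlinarith
  constructor
  · rw [h1]
    calc ‖v * (1 - y)‖ ≤ ‖v‖ * ‖1 - y‖ := norm_mul_le _ _
      _ ≤ (1 - ‖1 - y‖)⁻¹ * ‖1 - y‖ := mul_le_mul_of_nonneg_right hv1 hq
      _ = ‖1 - y‖ / (1 - ‖1 - y‖) := by ring
  · exact hv1


lemma isUnit_smul_of_isUnit {c : ℝ} (hc : c ≠ 0) {U : H →L[ℝ] H} (hU : IsUnit U) :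
    IsUnit (c • U) := by
  refine isUnit_iff_exists.mpr ⟨c⁻¹ • (↑hU.unit⁻¹ : H →L[ℝ] H), ?_, ?_⟩
  · rw [smul_mul_smul_comm, mul_inv_cancel₀ hc]
    have h1 : (↑hU.unit : H →L[ℝ] H) * ↑hU.unit⁻¹ = 1 := hU.unit.mul_inv
    rw [hU.unit_spec] at h1
    rw [h1, one_smul]
  · rw [smul_mul_smul_comm, inv_mul_cancel₀ hc]
    have h1 : (↑hU.unit⁻¹ : H →L[ℝ] H) * ↑hU.unit = 1 := hU.unit.inv_mul
    rw [hU.unit_spec] at h1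
    rw [h1, one_smul]

lemma unit_mul_inv {F : H →L[ℝ] H} (hFu : IsUnit F) : F * (↑hFu.unit⁻¹ : H →L[ℝ] H) = 1 := by
  have h1 : (↑hFu.unit : H →L[ℝ] H) * ↑hFu.unit⁻¹ = 1 := hFu.unit.mul_inv
  rwa [hFu.unit_spec] at h1

lemma unit_inv_mul {F : H →L[ℝ] H} (hFu : IsUnit F) : (↑hFu.unit⁻¹ : H →L[ℝ] H) * F = 1 := by
  have h1 : (↑hFu.unit⁻¹ : H →L[ℝ] H) * ↑hFu.unit = 1 := hFu.unit.inv_mul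
  rwa [hFu.unit_spec] at h1

lemma inv_selfAdjoint {F : H →L[ℝ] H} (hFu : IsUnit F) (hFsa : IsSelfAdjoint F) :
    IsSelfAdjoint (↑hFu.unit⁻¹ : H →L[ℝ] H) := by
  set Fi : H →L[ℝ] H := (↑hFu.unit⁻¹ : H →L[ℝ] H) with hFi
  have h1 : F * star Fi = 1 := by
    have := congrArg star (unit_inv_mul hFu)
    rwa [star_mul, hFsa.star_eq, star_one] at this
  show star Fi = Fi
  calc star Fi = (Fi * F) * star Fi := by rw [unit_inv_mul hFu, one_mul]
    _ = Fi * (F * star Fi) := by rw [mul_assoc]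
    _ = Fi := by rw [h1, mul_one]

lemma commute_inv {F Z : H →L[ℝ] H} (hFu : IsUnit F) (h : Z * F = F * Z) :
    Z * (↑hFu.unit⁻¹ : H →L[ℝ] H) = (↑hFu.unit⁻¹ : H →L[ℝ] H) * Z := by
  have hc : Commute Z F := h
  have hc2 : Commute Z (↑hFu.unit : H →L[ℝ] H) := by rwa [hFu.unit_spec]
  exact (hc2.units_inv_right).eq

/-- Key perturbation lemma: a small selfadjoint equivariant perturbation of an equivariant
symmetry is cogredient to it. -/
lemma symmetry_perturb (Q E : H →L[ℝ] H) (hQsa : IsSelfAdjoint Q) (hQsq : Q * Q = 1)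
    (hQeq : IsEquivariant ρ Q) (hEsa : IsSelfAdjoint E) (hEeq : IsEquivariant ρ E)
    (hE : ‖E‖ ≤ 1/8) :
    ∃ M : H →L[ℝ] H, IsUnit M ∧ IsEquivariant ρ M ∧ M * Q * star M = Q + E := by
  have hQ1 : ‖Q‖ ≤ 1 := norm_le_one_of_star_mul_self (by rw [hQsa.star_eq, hQsq])
  set Aop : H →L[ℝ] H := Q + E with hAop
  have hAsa : IsSelfAdjoint Aop := hQsa.add hEsa
  have hAeq : IsEquivariant ρ Aop := hQeq.add hEeq
  -- the defect D
  set D : H →L[ℝ] H := 1 - Aop * Aop with hD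
  have hDrep : D = -(Q*E + E*Q + E*E) := by
    have e1 : Aop * Aop = Q * Q + (Q*E + E*Q + E*E) := by rw [hAop]; noncomm_ring
    rw [hD, e1, hQsq]; abel
  have hDnorm : ‖D‖ ≤ 17/64 := by
    rw [hDrep, norm_neg]
    have h1 : ‖Q*E + E*Q + E*E‖ ≤ ‖Q*E‖ + ‖E*Q‖ + ‖E*E‖ :=
      (norm_add_le _ _).trans (add_le_add_left (norm_add_le _ _) _)
    have h2 : ‖Q*E‖ ≤ 1/8 := (norm_mul_le _ _).trans (by nlinarith [norm_nonneg E, norm_nonneg Q])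
    have h3 : ‖E*Q‖ ≤ 1/8 := (norm_mul_le _ _).trans (by nlinarith [norm_nonneg E, norm_nonneg Q])
    have h4 : ‖E*E‖ ≤ 1/64 := (norm_mul_le _ _).trans (by nlinarith [norm_nonneg E])
    linarith
  have hDsa : IsSelfAdjoint D := by
    show star D = D
    rw [hD, star_sub, star_one, star_mul, hAsa.star_eq]
  have hDeq : IsEquivariant ρ D := IsEquivariant.one.sub (hAeq.mul hAeq)
  have hDlt : ‖D‖ < 1 := hDnorm.trans_lt (by norm_num)
  obtain ⟨F, hFsq, hFnorm, hFcomm, hFsa', hFeq'⟩ := exists_sqrt ρ D hDlt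
  have hFsa : IsSelfAdjoint F := hFsa' hDsa
  have hFeq : IsEquivariant ρ F := hFeq' hDeq
  have hFA2 : F * F = Aop * Aop := by rw [hFsq, hD]; abel
  have hAF : Aop * F = F * Aop := by
    refine hFcomm Aop ?_
    rw [hD]; noncomm_ring
  have hFnorm' : ‖1 - F‖ ≤ 17/64 := hFnorm.trans hDnorm
  have hFlt : ‖1 - F‖ < 1 := hFnorm'.trans_lt (by norm_num)
  have hFu : IsUnit F := isUnit_of_norm_one_sub hFlt
  set Fi : H →L[ℝ] H := (↑hFu.unit⁻¹ : H →L[ℝ] H) with hFi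
  have hFFi : F * Fi = 1 := unit_mul_inv hFu
  have hFiF : Fi * F = 1 := unit_inv_mul hFu
  have hFisa : IsSelfAdjoint Fi := inv_selfAdjoint hFu hFsa
  have hFieq : IsEquivariant ρ Fi := IsEquivariant.inv hFu hFeq
  obtain ⟨hFi1, hFi2⟩ := inv_near_one hFlt hFu
  have hFi1' : ‖Fi - 1‖ ≤ 17/47 := by
    refine hFi1.trans ?_
    rw [div_le_iff₀ (by linarith)]
    nlinarith [norm_nonneg (1 - F)]
  have hFi2' : ‖Fi‖ ≤ 64/47 := by
    refine hFi2.trans ?_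
    rw [inv_eq_one_div, div_le_iff₀ (by linarith)]
    nlinarith [norm_nonneg (1 - F)]
  have hAFi : Aop * Fi = Fi * Aop := commute_inv hFu hAF
  set S : H →L[ℝ] H := Aop * Fi with hS
  have hSsa : IsSelfAdjoint S := by
    show star S = S
    rw [hS, star_mul, hFisa.star_eq, hAsa.star_eq, ← hAFi]
  have hSeq : IsEquivariant ρ S := hAeq.mul hFieq
  have hSsq : S * S = 1 := by
    have hcFiA : Commute Fi Aop := hAFi.symm
    calc S * S = Aop * Fi * (Aop * Fi) := by rw [hS]
      _ = Aop * Aop * (Fi * Fi) := hcFiA.mul_mul_mul_comm Aop Fi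
      _ = F * F * (Fi * Fi) := by rw [hFA2]
      _ = F * (F * (Fi * Fi)) := by rw [mul_assoc]
      _ = F * ((F * Fi) * Fi) := by rw [mul_assoc F Fi Fi]
      _ = 1 := by rw [hFFi, one_mul, hFFi]
  have hS1 : ‖S‖ ≤ 1 := norm_le_one_of_star_mul_self (by rw [hSsa.star_eq, hSsq])
  have hSQ : ‖S - Q‖ ≤ 25/47 := by
    have e : S - Q = Q * (Fi - 1) + E * Fi := by rw [hS, hAop]; noncomm_ring
    rw [e]
    have h1 : ‖Q * (Fi - 1)‖ ≤ 17/47 :=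
      (norm_mul_le _ _).trans (by nlinarith [norm_nonneg Q, norm_nonneg (Fi - 1)])
    have h2 : ‖E * Fi‖ ≤ 8/47 := by
      refine (norm_mul_le _ _).trans ?_
      nlinarith [norm_nonneg E, norm_nonneg Fi]
    calc ‖Q * (Fi - 1) + E * Fi‖ ≤ ‖Q * (Fi - 1)‖ + ‖E * Fi‖ := norm_add_le _ _
      _ ≤ 25/47 := by linarith
  -- the intertwiner X
  set X : H →L[ℝ] H := 1 + S * Q with hX
  have hXQ : S * X = X * Q := by
    have e1 : S * X = S + Q := by
      rw [hX, mul_add, mul_one, ← mul_assoc, hSsq, one_mul]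
    have e2 : X * Q = Q + S := by
      rw [hX, add_mul, one_mul, mul_assoc, hQsq, mul_one]
    rw [e1, e2, add_comm]
  have hXeq : IsEquivariant ρ X := IsEquivariant.one.add (hSeq.mul hQeq)
  have hQmS : ‖Q - S‖ ≤ 25/47 := by rw [norm_sub_rev]; exact hSQ
  have h1SQ : ‖(1 : H →L[ℝ] H) - S * Q‖ ≤ 25/47 := by
    have e : (1 : H →L[ℝ] H) - S * Q = (Q - S) * Q := by rw [sub_mul, hQsq]
    rw [e]
    exact (norm_mul_le _ _).trans (by nlinarith [norm_nonneg (Q - S), norm_nonneg Q])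
  have hXrep : X = (2:ℝ) • ((1 : H →L[ℝ] H) - (2⁻¹:ℝ) • (1 - S * Q)) := by
    rw [hX, smul_sub, smul_smul]
    norm_num
    rw [two_smul]
    abel
  have hXu : IsUnit X := by
    rw [hXrep]
    refine isUnit_smul_of_isUnit two_ne_zero (isUnit_of_norm_one_sub ?_)
    rw [sub_sub_cancel]
    have e : ‖(2⁻¹:ℝ) • ((1 : H →L[ℝ] H) - S * Q)‖ = 2⁻¹ * ‖(1 : H →L[ℝ] H) - S * Q‖ := by
      rw [norm_smul (2⁻¹:ℝ) ((1 : H →L[ℝ] H) - S * Q), Real.norm_eq_abs]; norm_num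
    rw [e]
    nlinarith [norm_nonneg ((1 : H →L[ℝ] H) - S * Q)]
  set Xi : H →L[ℝ] H := (↑hXu.unit⁻¹ : H →L[ℝ] H) with hXi
  have hXXi : X * Xi = 1 := unit_mul_inv hXu
  have hXstar : star X = 1 + Q * S := by
    rw [hX, star_add, star_one, star_mul, hSsa.star_eq, hQsa.star_eq]
  -- the positive part C
  set C : H →L[ℝ] H := (4⁻¹:ℝ) • ((Q - S) * (Q - S)) with hC
  have hQS2 : (Q - S) * (Q - S) = (2:ℝ) • 1 - Q * S - S * Q := by
    have e : (Q - S) * (Q - S) = Q * Q + S * S - Q * S - S * Q := by noncomm_ring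
    rw [e, hQsq, hSsq, two_smul]
  have hXXs : star X * X = (4:ℝ) • ((1 : H →L[ℝ] H) - C) := by
    have e1 : star X * X = 1 + S * Q + Q * S + (Q * S) * (S * Q) := by
      rw [hXstar, hX]; noncomm_ring
    have e2 : (Q * S) * (S * Q) = 1 := by
      rw [mul_assoc Q S (S * Q), ← mul_assoc S S Q, hSsq, one_mul, hQsq]
    rw [e1, e2, hC, smul_sub, smul_smul]
    norm_num
    rw [hQS2]
    have : (4:ℝ) • (1 : H →L[ℝ] H) - ((2:ℝ) • 1 - Q * S - S * Q)
        = (2:ℝ) • (1 : H →L[ℝ] H) + Q * S + S * Q := by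
      rw [show (4:ℝ) = 2 + 2 by norm_num, add_smul]
      abel
    rw [this, two_smul]
    abel
  have hCnorm : ‖C‖ ≤ 625/8836 := by
    have e : ‖C‖ = 4⁻¹ * ‖(Q - S) * (Q - S)‖ := by
      rw [hC, norm_smul (4⁻¹:ℝ) ((Q - S) * (Q - S)), Real.norm_eq_abs]; norm_num
    rw [e]
    have h2 : ‖(Q - S) * (Q - S)‖ ≤ (25/47) * (25/47) :=
      (norm_mul_le _ _).trans (by nlinarith [norm_nonneg (Q - S), hQmS])
    nlinarith
  have hClt : ‖C‖ < 1 := hCnorm.trans_lt (by norm_num)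
  have hCsa : IsSelfAdjoint C := by
    show star C = C
    rw [hC, star_smul, star_trivial, star_mul, star_sub, hQsa.star_eq, hSsa.star_eq]
  have hCQ : Q * C = C * Q := by
    rw [hC, mul_smul_comm, smul_mul_assoc]
    congr 1
    rw [hQS2]
    have a1 : Q * ((2:ℝ) • 1 - Q * S - S * Q) = (2:ℝ) • Q - Q * (Q * S) - Q * (S * Q) := by
      rw [mul_sub, mul_sub, mul_smul_comm, mul_one]
    have a2 : Q * (Q * S) = S := by rw [← mul_assoc, hQsq, one_mul]
    have b1 : ((2:ℝ) • 1 - Q * S - S * Q) * Q = (2:ℝ) • Q - (Q * S) * Q - (S * Q) * Q := by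
      rw [sub_mul, sub_mul, smul_mul_assoc, one_mul]
    have b2 : (S * Q) * Q = S := by rw [mul_assoc, hQsq, mul_one]
    have c1 : (Q * S) * Q = Q * (S * Q) := mul_assoc _ _ _
    rw [a1, a2, b1, b2, c1]
    abel
  have hCeq : IsEquivariant ρ C := ((hQeq.sub hSeq).mul (hQeq.sub hSeq)).smul _
  obtain ⟨R, hRsq, hRnorm, hRcomm, hRsa', hReq'⟩ := exists_sqrt ρ C hClt
  have hRsa : IsSelfAdjoint R := hRsa' hCsa
  have hReq : IsEquivariant ρ R := hReq' hCeq
  have hRu : IsUnit R := isUnit_of_norm_one_sub (hRnorm.trans_lt hClt)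
  set Ri : H →L[ℝ] H := (↑hRu.unit⁻¹ : H →L[ℝ] H) with hRi
  have hRRi : R * Ri = 1 := unit_mul_inv hRu
  have hRiR : Ri * R = 1 := unit_inv_mul hRu
  have hRisa : IsSelfAdjoint Ri := inv_selfAdjoint hRu hRsa
  have hRieq : IsEquivariant ρ Ri := IsEquivariant.inv hRu hReq
  have hQR : Q * R = R * Q := hRcomm Q hCQ
  have hQRi : Q * Ri = Ri * Q := commute_inv hRu hQR
  have hXXsR : star X * X = (4:ℝ) • (R * R) := by rw [hXXs, hRsq]
  -- M₁ conjugates Q to S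
  set M₁ : H →L[ℝ] H := (2⁻¹:ℝ) • (X * Ri) with hM₁
  have hM₁star : star M₁ = (2⁻¹:ℝ) • (Ri * star X) := by
    rw [hM₁, star_smul, star_trivial, star_mul, hRisa.star_eq]
  have claimB : (Ri * Ri) * (star X * X) = (4:ℝ) • 1 := by
    rw [hXXsR, mul_smul_comm]
    congr 1
    rw [mul_assoc Ri Ri (R * R), ← mul_assoc Ri R R, hRiR, one_mul, hRiR]
  have claimC : X * ((Ri * Ri) * star X) = (4:ℝ) • 1 := by
    have e1 : (Ri * Ri) * star X = ((Ri * Ri) * (star X * X)) * Xi := by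
      calc (Ri * Ri) * star X = (Ri * Ri) * (star X * (X * Xi)) := by rw [hXXi, mul_one]
        _ = (Ri * Ri) * ((star X * X) * Xi) := by rw [mul_assoc (star X) X Xi]
        _ = ((Ri * Ri) * (star X * X)) * Xi := (mul_assoc _ _ _).symm
    rw [e1, claimB, smul_mul_assoc, one_mul, mul_smul_comm, hXXi]
  have hM1Q : M₁ * Q * star M₁ = S := by
    have l1 : (X * Ri) * Q = (S * X) * Ri := by
      rw [mul_assoc X Ri Q, ← hQRi, ← mul_assoc X Q Ri, ← hXQ]
    have l2 : ((X * Ri) * Q) * (Ri * star X) = S * (X * ((Ri * Ri) * star X)) := by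
      rw [l1]
      calc (S * X * Ri) * (Ri * star X) = S * (X * (Ri * (Ri * star X))) := by
            rw [mul_assoc S X Ri, mul_assoc S (X * Ri) (Ri * star X),
              mul_assoc X Ri (Ri * star X)]
        _ = S * (X * ((Ri * Ri) * star X)) := by rw [← mul_assoc Ri Ri (star X)]
    have core : ((X * Ri) * Q) * (Ri * star X) = (4:ℝ) • S := by
      rw [l2, claimC, mul_smul_comm, mul_one]
    rw [hM₁, hM₁star, smul_mul_assoc, mul_smul_comm, smul_mul_assoc, smul_smul, core, smul_smul]
    norm_num
  have hM₁u : IsUnit M₁ := by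
    rw [hM₁]
    exact isUnit_smul_of_isUnit (by norm_num) (hXu.mul hRu.unit⁻¹.isUnit)
  have hM₁eq : IsEquivariant ρ M₁ := (hXeq.mul hRieq).smul _
  -- the square root G of F
  have h1Flt : ‖(1 : H →L[ℝ] H) - F‖ < 1 := hFlt
  obtain ⟨Gop, hGsq, hGnorm, hGcomm, hGsa', hGeq'⟩ := exists_sqrt ρ (1 - F) h1Flt
  have hGF : Gop * Gop = F := by rw [hGsq]; abel
  have hGsa : IsSelfAdjoint Gop := hGsa' ((IsSelfAdjoint.one _).sub hFsa)
  have hGeqv : IsEquivariant ρ Gop := hGeq' (IsEquivariant.one.sub hFeq)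
  have hGu : IsUnit Gop := isUnit_of_norm_one_sub (hGnorm.trans_lt h1Flt)
  have hSF : S * F = Aop := by rw [hS, mul_assoc, hFiF, mul_one]
  have hFS : F * S = Aop := by rw [hS, ← mul_assoc, ← hAF, mul_assoc, hFFi, mul_one]
  have hSG : S * Gop = Gop * S :=
    hGcomm S (by rw [mul_sub, sub_mul, mul_one, one_mul, hSF, hFS])
  refine ⟨Gop * M₁, hGu.mul hM₁u, hGeqv.mul hM₁eq, ?_⟩
  have hstar : star (Gop * M₁) = star M₁ * Gop := by rw [star_mul, hGsa.star_eq]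
  calc (Gop * M₁) * Q * star (Gop * M₁) = Gop * (M₁ * Q * star M₁) * Gop := by
        rw [hstar]; noncomm_ring
    _ = (Gop * S) * Gop := by rw [hM1Q, ← mul_assoc]
    _ = (S * Gop) * Gop := by rw [← hSG]
    _ = S * (Gop * Gop) := mul_assoc _ _ _
    _ = Q + E := by rw [hGF, hSF]


lemma sa_inner_symm {W : H →L[ℝ] H} (hW : IsSelfAdjoint W) (x y : H) :
    ⟪W x, y⟫ = ⟪x, W y⟫ := by
  have h : ContinuousLinearMap.adjoint W = W := by
    rwa [← ContinuousLinearMap.star_eq_adjoint]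
  conv_lhs => rw [← h]
  exact ContinuousLinearMap.adjoint_inner_left W y x

/-- Norm bound for operators with nonnegative quadratic form bounded by `k`. -/
lemma norm_le_of_quadratic {W : H →L[ℝ] H} (hW : IsSelfAdjoint W) {k : ℝ} (hk : 0 ≤ k)
    (h0 : ∀ x, 0 ≤ ⟪W x, x⟫) (h1 : ∀ x, ⟪W x, x⟫ ≤ k * ‖x‖ ^ 2) : ‖W‖ ≤ k := by
  refine ContinuousLinearMap.opNorm_le_bound _ hk ?_
  intro x
  have CS : ∀ u v : H, ⟪W u, v⟫ ^ 2 ≤ ⟪W u, u⟫ * ⟪W v, v⟫ := by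
    intro u v
    have hexp : ∀ t : ℝ, 0 ≤ ⟪W v, v⟫ * (t * t) + (2 * ⟪W u, v⟫) * t + ⟪W u, u⟫ := by
      intro t
      have e : ⟪W (u + t • v), u + t • v⟫
          = ⟪W v, v⟫ * (t * t) + (2 * ⟪W u, v⟫) * t + ⟪W u, u⟫ := by
        rw [map_add, map_smul]
        rw [inner_add_left, inner_add_right, inner_add_right]
        rw [inner_smul_left, inner_smul_right, real_inner_smul_left, real_inner_smul_right]
        have hsym : ⟪W v, u⟫ = ⟪W u, v⟫ := by
          rw [sa_inner_symm hW v u, real_inner_comm]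
        simp only [RCLike.star_def, starRingEnd_apply, star_trivial]
        rw [hsym]
        ring
      rw [← e]
      exact h0 _
    have hd := discrim_le_zero hexp
    rw [discrim] at hd
    nlinarith
  rcases le_or_gt ‖W x‖ 0 with h | h
  · have : ‖W x‖ = 0 := le_antisymm h (norm_nonneg _)
    rw [this]
    positivity
  · have key := CS x (W x)
    have e1 : ⟪W x, W x⟫ = ‖W x‖ ^ 2 := real_inner_self_eq_norm_sq _
    have b1 : ⟪W x, x⟫ ≤ k * ‖x‖ ^ 2 := h1 x
    have b2 : ⟪W (W x), W x⟫ ≤ k * ‖W x‖ ^ 2 := h1 (W x)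
    have b0 : 0 ≤ ⟪W x, x⟫ := h0 x
    have b0' : 0 ≤ ⟪W (W x), W x⟫ := h0 (W x)
    -- ‖Wx‖^4 ≤ k^2 ‖x‖^2 ‖Wx‖^2
    have h4 : ‖W x‖ ^ 4 ≤ k ^ 2 * ‖x‖ ^ 2 * ‖W x‖ ^ 2 := by
      have := key
      rw [e1] at this
      nlinarith [sq_nonneg ‖W x‖, sq_nonneg ‖x‖]
    have h5 : ‖W x‖ ^ 2 ≤ (k * ‖x‖) ^ 2 := by
      have hpos : (0:ℝ) < ‖W x‖ ^ 2 := by positivity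
      nlinarith
    nlinarith [norm_nonneg (W x), norm_nonneg x, mul_nonneg hk (norm_nonneg x)]

/-- Every invertible selfadjoint equivariant operator factors as `M Q' M*` with `Q'` an
equivariant symmetry. -/
lemma exists_symmetry_factor (Aop : H →L[ℝ] H) (hAu : IsUnit Aop) (hAsa : IsSelfAdjoint Aop)
    (hAeq : IsEquivariant ρ Aop) :
    ∃ Q' M : H →L[ℝ] H, IsSelfAdjoint Q' ∧ Q' * Q' = 1 ∧ IsEquivariant ρ Q' ∧
      IsUnit M ∧ IsEquivariant ρ M ∧ M * Q' * star M = Aop := by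
  rcases subsingleton_or_nontrivial H with hsub | hnt
  · refine ⟨1, 1, ?_, one_mul 1, IsEquivariant.one, isUnit_one, IsEquivariant.one, ?_⟩
    · show star (1 : H →L[ℝ] H) = 1; rw [star_one]
    · ext x; exact Subsingleton.elim _ _
  · set Ai : H →L[ℝ] H := (↑hAu.unit⁻¹ : H →L[ℝ] H) with hAi
    have hAAi : Aop * Ai = 1 := unit_mul_inv hAu
    have hAiA : Ai * Aop = 1 := unit_inv_mul hAu
    set B : H →L[ℝ] H := Aop * Aop with hB
    set a : ℝ := ‖B‖ with ha
    have hBx : ∀ x, ⟪B x, x⟫ = ‖Aop x‖ ^ 2 := by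
      intro x
      have e : B x = Aop (Aop x) := rfl
      rw [e, sa_inner_symm hAsa (Aop x) x, real_inner_self_eq_norm_sq]
    have hBsa : IsSelfAdjoint B := by
      show star B = B
      rw [hB, star_mul, hAsa.star_eq]
    have hBeq : IsEquivariant ρ B := hAeq.mul hAeq
    have h1ne : (1 : H →L[ℝ] H) ≠ 0 := by
      obtain ⟨x, hx⟩ := exists_ne (0 : H)
      intro h
      have h2 := congrArg (fun T : H →L[ℝ] H => T x) h
      exact hx (by simpa using h2)
    have hAine : Ai ≠ 0 := by
      intro h
      rw [h, zero_mul] at hAiA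
      exact h1ne hAiA.symm
    have hni : 0 < ‖Ai‖ := norm_pos_iff.mpr hAine
    have hBne : B ≠ 0 := by
      intro h
      have e : (1 : H →L[ℝ] H) = (Ai * Ai) * B := by
        rw [hB, ← mul_assoc, mul_assoc Ai Ai Aop, hAiA, mul_one, hAiA]
      rw [h, mul_zero] at e
      exact h1ne e
    have hapos : 0 < a := norm_pos_iff.mpr hBne
    have hA2 : ‖Aop‖ * ‖Aop‖ = a := by
      have e : ‖star Aop * Aop‖ = ‖Aop‖ * ‖Aop‖ := CStarRing.norm_star_mul_self
      rw [hAsa.star_eq] at e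
      rw [ha, hB]
      exact e.symm
    have hchain : 1 ≤ ‖Aop‖ * ‖Ai‖ := by
      have hid : ‖(1 : H →L[ℝ] H)‖ = 1 := by
        rw [ContinuousLinearMap.one_def]
        exact ContinuousLinearMap.norm_id
      calc (1:ℝ) = ‖(1 : H →L[ℝ] H)‖ := hid.symm
        _ = ‖Aop * Ai‖ := by rw [hAAi]
        _ ≤ ‖Aop‖ * ‖Ai‖ := norm_mul_le _ _
    set c : ℝ := (a + 1)⁻¹ with hc
    have hapos1 : 0 < a + 1 := by linarith
    have hcpos : 0 < c := by rw [hc]; positivity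
    have hca : c * (a + 1) = 1 := by rw [hc]; field_simp
    set t : H →L[ℝ] H := 1 - c • B with hts
    have htsa : IsSelfAdjoint t :=
      (IsSelfAdjoint.one _).sub (IsSelfAdjoint.smul (star_trivial _) hBsa)
    have hteq : IsEquivariant ρ t := IsEquivariant.one.sub (hBeq.smul c)
    set k : ℝ := 1 - c / (‖Ai‖ * ‖Ai‖) with hkdef
    have hnorm_sq : 1 ≤ a * (‖Ai‖ * ‖Ai‖) := by nlinarith [norm_nonneg Aop, norm_nonneg Ai]
    have hk0 : 0 ≤ k := by
      rw [hkdef, sub_nonneg, div_le_one (by positivity), hc, inv_le_iff_one_le_mul₀ hapos1]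
      nlinarith
    have hk1 : k < 1 := by
      rw [hkdef]
      have : 0 < c / (‖Ai‖ * ‖Ai‖) := by positivity
      linarith
    have htx : ∀ x, ⟪t x, x⟫ = ‖x‖ ^ 2 - c * ‖Aop x‖ ^ 2 := by
      intro x
      have e : t x = x - c • (B x) := rfl
      rw [e, inner_sub_left, real_inner_smul_left, hBx, real_inner_self_eq_norm_sq]
    have hAople : ∀ x : H, ‖Aop x‖ ^ 2 ≤ a * ‖x‖ ^ 2 := by
      intro x
      have h := Aop.le_opNorm x
      nlinarith [norm_nonneg (Aop x), norm_nonneg x, norm_nonneg Aop]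
    have hAopge : ∀ x : H, ‖x‖ ^ 2 ≤ (‖Ai‖ * ‖Ai‖) * ‖Aop x‖ ^ 2 := by
      intro x
      have e : Ai (Aop x) = x := by
        have h2 := congrArg (fun T : H →L[ℝ] H => T x) hAiA
        simpa using h2
      have h := Ai.le_opNorm (Aop x)
      rw [e] at h
      nlinarith [norm_nonneg x, norm_nonneg (Aop x), norm_nonneg Ai]
    have h0 : ∀ x, 0 ≤ ⟪t x, x⟫ := by
      intro x
      rw [htx]
      have h := hAople x
      have hca' : c * a ≤ 1 := by nlinarith
      nlinarith [sq_nonneg ‖x‖, hcpos.le]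
    have h1 : ∀ x, ⟪t x, x⟫ ≤ k * ‖x‖ ^ 2 := by
      intro x
      rw [htx, hkdef]
      have h := hAopge x
      have key : c / (‖Ai‖ * ‖Ai‖) * ‖x‖ ^ 2 ≤ c * ‖Aop x‖ ^ 2 := by
        rw [div_mul_eq_mul_div, div_le_iff₀ (by positivity)]
        nlinarith [hcpos.le]
      nlinarith
    have htnorm : ‖t‖ ≤ k := norm_le_of_quadratic htsa hk0 h0 h1
    have htlt : ‖t‖ < 1 := htnorm.trans_lt hk1
    obtain ⟨y, hysq, hynorm, hycomm, hysa', hyeq'⟩ := exists_sqrt ρ t htlt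
    have hysa : IsSelfAdjoint y := hysa' htsa
    have hyeq : IsEquivariant ρ y := hyeq' hteq
    have hyB : y * y = c • B := by rw [hysq, hts, sub_sub_cancel]
    have hylt : ‖1 - y‖ < 1 := hynorm.trans_lt htlt
    have hyu : IsUnit y := isUnit_of_norm_one_sub hylt
    have hAB : Aop * B = B * Aop := by rw [hB, ← mul_assoc]
    have hAt : Aop * t = t * Aop := by
      rw [hts, mul_sub, sub_mul, mul_one, one_mul, mul_smul_comm, smul_mul_assoc, hAB]
    have hAy : Aop * y = y * Aop := hycomm Aop hAt
    set sc : ℝ := Real.sqrt (a + 1) with hscdef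
    have hsc : sc * sc = a + 1 := Real.mul_self_sqrt hapos1.le
    have hscpos : 0 < sc := Real.sqrt_pos.mpr hapos1
    set N : H →L[ℝ] H := sc • y with hN
    have hNN : N * N = B := by
      rw [hN, smul_mul_smul_comm, hyB, smul_smul, hsc, mul_comm (a+1) c, hca, one_smul]
    have hNu : IsUnit N := isUnit_smul_of_isUnit (ne_of_gt hscpos) hyu
    have hNsa : IsSelfAdjoint N := IsSelfAdjoint.smul (star_trivial _) hysa
    have hNeq : IsEquivariant ρ N := hyeq.smul sc
    have hAN : Aop * N = N * Aop := by rw [hN, mul_smul_comm, smul_mul_assoc, hAy]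
    set Ni : H →L[ℝ] H := (↑hNu.unit⁻¹ : H →L[ℝ] H) with hNi
    have hNNi : N * Ni = 1 := unit_mul_inv hNu
    have hNiN : Ni * N = 1 := unit_inv_mul hNu
    have hNisa : IsSelfAdjoint Ni := inv_selfAdjoint hNu hNsa
    have hNieq : IsEquivariant ρ Ni := IsEquivariant.inv hNu hNeq
    have hANi : Aop * Ni = Ni * Aop := commute_inv hNu hAN
    set Q' : H →L[ℝ] H := Aop * Ni with hQ'
    have hQ'sa : IsSelfAdjoint Q' := by
      show star Q' = Q'
      rw [hQ', star_mul, hNisa.star_eq, hAsa.star_eq, ← hANi]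
    have hQ'eq : IsEquivariant ρ Q' := hAeq.mul hNieq
    have hQ'sq : Q' * Q' = 1 := by
      have hcNiA : Commute Ni Aop := hANi.symm
      calc Q' * Q' = Aop * Ni * (Aop * Ni) := by rw [hQ']
        _ = Aop * Aop * (Ni * Ni) := hcNiA.mul_mul_mul_comm Aop Ni
        _ = N * N * (Ni * Ni) := by rw [hNN, hB]
        _ = N * ((N * Ni) * Ni) := by rw [mul_assoc, mul_assoc N Ni Ni]
        _ = 1 := by rw [hNNi, one_mul, hNNi]
    obtain ⟨g, hgsq, hgnorm, hgcomm, hgsa', hgeq'⟩ := exists_sqrt ρ (1 - y) hylt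
    have hgy : g * g = y := by rw [hgsq, sub_sub_cancel]
    have hgsa : IsSelfAdjoint g := hgsa' ((IsSelfAdjoint.one _).sub hysa)
    have hgeq : IsEquivariant ρ g := hgeq' (IsEquivariant.one.sub hyeq)
    have hgu : IsUnit g := isUnit_of_norm_one_sub (hgnorm.trans_lt hylt)
    set sg : ℝ := Real.sqrt sc with hsgdef
    have hsg : sg * sg = sc := Real.mul_self_sqrt hscpos.le
    have hsgpos : 0 < sg := Real.sqrt_pos.mpr hscpos
    set M : H →L[ℝ] H := sg • g with hM
    have hMM : M * M = N := by rw [hM, smul_mul_smul_comm, hgy, hsg, hN]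
    have hMu : IsUnit M := isUnit_smul_of_isUnit (ne_of_gt hsgpos) hgu
    have hMsa : IsSelfAdjoint M := IsSelfAdjoint.smul (star_trivial _) hgsa
    have hMeq : IsEquivariant ρ M := hgeq.smul sg
    have hyN : y * N = N * y := by rw [hN, mul_smul_comm, smul_mul_assoc]
    have hyNi : y * Ni = Ni * y := commute_inv hNu hyN
    have hQ'y : Q' * y = y * Q' := by
      calc Q' * y = Aop * (Ni * y) := by rw [hQ', mul_assoc]
        _ = Aop * (y * Ni) := by rw [← hyNi]
        _ = (Aop * y) * Ni := by rw [mul_assoc]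
        _ = (y * Aop) * Ni := by rw [hAy]
        _ = y * Q' := by rw [hQ', mul_assoc]
    have hQ'g : Q' * g = g * Q' :=
      hgcomm Q' (by rw [mul_sub, sub_mul, mul_one, one_mul, hQ'y])
    have hQ'M : Q' * M = M * Q' := by rw [hM, mul_smul_comm, smul_mul_assoc, hQ'g]
    refine ⟨Q', M, hQ'sa, hQ'sq, hQ'eq, hMu, hMeq, ?_⟩
    rw [hMsa.star_eq]
    calc M * Q' * M = (Q' * M) * M := by rw [← hQ'M]
      _ = Q' * (M * M) := mul_assoc _ _ _
      _ = Q' * N := by rw [hMM]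
      _ = Aop * (Ni * N) := by rw [hQ', mul_assoc]
      _ = Aop := by rw [hNiN, mul_one]



lemma IsEquivariant.star' {M : H →L[ℝ] H} (hMe : IsEquivariant ρ M) :
    IsEquivariant ρ (star M) := by
  rw [ContinuousLinearMap.star_eq_adjoint]
  exact hMe.adjoint

lemma mem_orbit_iff {Q T : H →L[ℝ] H} :
    T ∈ cogredientOrbit ρ Q ↔ ∃ M K : H →L[ℝ] H, IsUnit M ∧ IsEquivariant ρ M ∧
      IsCompactOperator ⇑K ∧ IsSelfAdjoint K ∧ IsEquivariant ρ K ∧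
      T = M * Q * star M + K := by
  unfold cogredientOrbit
  simp only [Set.mem_setOf_eq, ContinuousLinearMap.star_eq_adjoint]

lemma compact_conj {K M : H →L[ℝ] H} (hK : IsCompactOperator ⇑K) :
    IsCompactOperator ⇑(M * K * star M) := by
  have h1 : IsCompactOperator (⇑K ∘ ⇑(star M)) := hK.comp_clm (star M)
  have h2 : IsCompactOperator (⇑M ∘ (⇑K ∘ ⇑(star M))) := h1.clm_comp M
  exact h2

lemma sa_conj {K M : H →L[ℝ] H} (hK : IsSelfAdjoint K) : IsSelfAdjoint (M * K * star M) := by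
  show star _ = _
  rw [star_mul, star_mul, star_star, hK.star_eq, mul_assoc]

lemma orbit_trans {Q₁ Q₂ : H →L[ℝ] H} (h : Q₂ ∈ cogredientOrbit ρ Q₁) :
    cogredientOrbit ρ Q₂ ⊆ cogredientOrbit ρ Q₁ := by
  rw [mem_orbit_iff] at h
  obtain ⟨M₁, K₁, hM₁u, hM₁e, hK₁c, hK₁sa, hK₁e, hQ₂⟩ := h
  intro T hT
  rw [mem_orbit_iff] at hT ⊢
  obtain ⟨M₂, K₂, hM₂u, hM₂e, hK₂c, hK₂sa, hK₂e, hTe⟩ := hT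
  refine ⟨M₂ * M₁, M₂ * K₁ * star M₂ + K₂, hM₂u.mul hM₁u, hM₂e.mul hM₁e,
    (compact_conj hK₁c).add hK₂c, (sa_conj hK₁sa).add hK₂sa,
    ((hM₂e.mul hK₁e).mul hM₂e.star').add hK₂e, ?_⟩
  rw [hTe, hQ₂, star_mul]
  noncomm_ring

lemma orbit_symm {Q T : H →L[ℝ] H} (h : T ∈ cogredientOrbit ρ Q) :
    Q ∈ cogredientOrbit ρ T := by
  rw [mem_orbit_iff] at h ⊢
  obtain ⟨M, K, hMu, hMe, hKc, hKsa, hKe, hTe⟩ := h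
  set Mi : H →L[ℝ] H := (↑hMu.unit⁻¹ : H →L[ℝ] H) with hMi
  have hMMi : M * Mi = 1 := unit_mul_inv hMu
  have hMiM : Mi * M = 1 := unit_inv_mul hMu
  have hMiu : IsUnit Mi := hMu.unit⁻¹.isUnit
  have hMie : IsEquivariant ρ Mi := IsEquivariant.inv hMu hMe
  have hstar1 : star M * star Mi = 1 := by rw [← star_mul, hMiM, star_one]
  refine ⟨Mi, -(Mi * K * star Mi), hMiu, hMie, (compact_conj hKc).neg, (sa_conj hKsa).neg,
    ((hMie.mul hKe).mul hMie.star').neg, ?_⟩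
  have e1 : Mi * T * star Mi = Q + Mi * K * star Mi := by
    rw [hTe]
    have e2 : Mi * (M * Q * star M + K) * star Mi
        = (Mi * M) * Q * (star M * star Mi) + Mi * K * star Mi := by noncomm_ring
    rw [e2, hMiM, hstar1, one_mul, mul_one]
  rw [e1]
  abel

/-- The orbit of an equivariant symmetry is norm-open among selfadjoint equivariant
operators. -/
lemma orbit_norm_open {Q : H →L[ℝ] H} (hQsa : IsSelfAdjoint Q) (hQsq : Q * Q = 1)
    (hQeq : IsEquivariant ρ Q) {T : H →L[ℝ] H} (hT : T ∈ cogredientOrbit ρ Q) :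
    ∃ δ : ℝ, 0 < δ ∧ ∀ T' : H →L[ℝ] H, IsSelfAdjoint T' → IsEquivariant ρ T' →
      ‖T' - T‖ < δ → T' ∈ cogredientOrbit ρ Q := by
  rw [mem_orbit_iff] at hT
  obtain ⟨M, K, hMu, hMe, hKc, hKsa, hKe, hTe⟩ := hT
  set Mi : H →L[ℝ] H := (↑hMu.unit⁻¹ : H →L[ℝ] H) with hMi
  have hMMi : M * Mi = 1 := unit_mul_inv hMu
  have hMiM : Mi * M = 1 := unit_inv_mul hMu
  have hMie : IsEquivariant ρ Mi := IsEquivariant.inv hMu hMe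
  refine ⟨(8 * (‖Mi‖ * ‖Mi‖ + 1))⁻¹, by positivity, ?_⟩
  intro T' hT'sa hT'eq hd
  set Δ : H →L[ℝ] H := T' - T with hΔ
  have hΔsa : IsSelfAdjoint Δ := hT'sa.sub (by rw [hTe]; exact (sa_conj hQsa).add hKsa)
  have hΔeq : IsEquivariant ρ Δ := hT'eq.sub (by
    rw [hTe]; exact ((hMe.mul hQeq).mul hMe.star').add hKe)
  set E : H →L[ℝ] H := Mi * Δ * star Mi with hE
  have hEsa : IsSelfAdjoint E := sa_conj hΔsa
  have hEeq : IsEquivariant ρ E := (hMie.mul hΔeq).mul hMie.star'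
  have hEnorm : ‖E‖ ≤ 1/8 := by
    have h1 : ‖E‖ ≤ ‖Mi‖ * ‖Δ‖ * ‖Mi‖ := by
      calc ‖E‖ ≤ ‖Mi * Δ‖ * ‖star Mi‖ := norm_mul_le _ _
        _ = ‖Mi * Δ‖ * ‖Mi‖ := by
            congr 1
            rw [ContinuousLinearMap.star_eq_adjoint]
            exact LinearIsometryEquiv.norm_map ContinuousLinearMap.adjoint Mi
        _ ≤ ‖Mi‖ * ‖Δ‖ * ‖Mi‖ := by
            have := norm_mul_le Mi Δ
            nlinarith [norm_nonneg Mi, norm_nonneg (Mi * Δ)]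
    have h2 : ‖Δ‖ < (8 * (‖Mi‖ * ‖Mi‖ + 1))⁻¹ := hd
    have h3 : (0:ℝ) < 8 * (‖Mi‖ * ‖Mi‖ + 1) := by positivity
    rw [inv_eq_one_div, lt_div_iff₀ h3] at h2
    nlinarith [norm_nonneg Mi, norm_nonneg Δ, sq_nonneg ‖Mi‖]
  obtain ⟨M₁, hM₁u, hM₁e, hM₁Q⟩ := symmetry_perturb Q E hQsa hQsq hQeq hEsa hEeq hEnorm
  rw [mem_orbit_iff]
  refine ⟨M * M₁, K, hMu.mul hM₁u, hMe.mul hM₁e, hKc, hKsa, hKe, ?_⟩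
  have hstar2 : star Mi * star M = 1 := by rw [← star_mul, hMMi, star_one]
  have hMEM : M * E * star M = Δ := by
    rw [hE]
    have e2 : M * (Mi * Δ * star Mi) * star M = (M * Mi) * Δ * (star Mi * star M) := by
      noncomm_ring
    rw [e2, hMMi, hstar2, one_mul, mul_one]
  have e3 : (M * M₁) * Q * star (M * M₁) = M * (M₁ * Q * star M₁) * star M := by
    rw [star_mul]
    noncomm_ring
  rw [e3, hM₁Q]
  have e4 : M * (Q + E) * star M = M * Q * star M + M * E * star M := by noncomm_ring
  rw [e4, hMEM]
  have : T' = T + Δ := by rw [hΔ]; abel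
  rw [this, hTe]
  abel

/-- Every selfadjoint equivariant Fredholm operator lies in the orbit of some equivariant
symmetry. -/
lemma exists_orbit_symmetry {T : H →L[ℝ] H} (hTsa : IsSelfAdjoint T)
    (hTeq : IsEquivariant ρ T) (hTf : IsFredholmOp T) :
    ∃ Q' : H →L[ℝ] H, IsSelfAdjoint Q' ∧ Q' * Q' = 1 ∧ IsEquivariant ρ Q' ∧
      T ∈ cogredientOrbit ρ Q' := by
  classical
  have hfin : FiniteDimensional ℝ (LinearMap.ker (T : H →ₗ[ℝ] H)) := hTf.1
  set Kk : Submodule ℝ H := LinearMap.ker (T : H →ₗ[ℝ] H) with hKk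
  haveI : CompleteSpace Kk := FiniteDimensional.complete ℝ Kk
  set P : H →L[ℝ] H := Kk.subtypeL ∘L Kk.orthogonalProjectionOnto with hP
  have hPapp : ∀ x, P x = (Kk.orthogonalProjectionOnto x : H) := fun x => rfl
  have hPsa : IsSelfAdjoint P := isSelfAdjoint_starProjection Kk
  have hPmem : ∀ x, P x ∈ Kk := fun x => (Kk.orthogonalProjectionOnto x).2
  have hPid : ∀ x, x ∈ Kk → P x = x := by
    intro x hx
    rw [hPapp]; exact Submodule.starProjection_eq_self_iff.mpr hx
  have hTker : ∀ x, x ∈ Kk → T x = 0 := fun x hx => hx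
  have hrhoker : ∀ (g : G) (x : H), x ∈ Kk → ρ g x ∈ Kk := by
    intro g x hx
    have : T (ρ g x) = ρ g (T x) := hTeq g x
    rw [hTker x hx, map_zero] at this
    exact LinearMap.mem_ker.mpr this
  have hPeq : IsEquivariant ρ P := by
    intro g u
    have hv : ρ g (P u) ∈ Kk := hrhoker g _ (hPmem u)
    have ho : ρ g u - ρ g (P u) ∈ Kkᗮ := by
      have e : ρ g u - ρ g (P u) = ρ g (u - P u) := (map_sub (ρ g).toLinearEquiv u (P u)).symm
      rw [e]
      rw [Submodule.mem_orthogonal]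
      intro w hw
      have hw' : ρ g⁻¹ w ∈ Kk := hrhoker g⁻¹ w hw
      have hperp : u - P u ∈ Kkᗮ := by
        rw [hPapp]
        exact Submodule.sub_starProjection_mem_orthogonal (K := Kk) u
      have e2 : inner ℝ (ρ g (u - P u)) w = inner ℝ (u - P u) (ρ g⁻¹ w) :=
        rho_inner_left (ρ := ρ) g (u - P u) w
      rw [real_inner_comm, e2]
      rw [Submodule.mem_orthogonal] at hperp
      rw [real_inner_comm]
      exact hperp (ρ g⁻¹ w) hw'
    have := Submodule.eq_starProjection_of_mem_orthogonal (K := Kk) hv ho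
    exact this
  have hPc : IsCompactOperator ⇑P := by
    rw [isCompactOperator_iff_exists_mem_nhds_image_subset_compact]
    refine ⟨Metric.ball 0 1, Metric.ball_mem_nhds 0 one_pos,
      Subtype.val '' Metric.closedBall (0 : Kk) 1, ?_, ?_⟩
    · exact (ProperSpace.isCompact_closedBall _ _).image continuous_subtype_val
    · rintro y ⟨x, hx, rfl⟩
      refine ⟨Kk.orthogonalProjectionOnto x, ?_, rfl⟩
      rw [Metric.mem_closedBall, dist_zero_right]
      have h1 := Submodule.orthogonalProjectionOnto_norm_le Kk
      have h2 : ‖Kk.orthogonalProjectionOnto x‖ ≤ 1 * ‖x‖ :=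
        (Kk.orthogonalProjectionOnto).le_of_opNorm_le h1 x
      rw [Metric.mem_ball, dist_zero_right] at hx
      linarith
  -- invertibility of T + P
  have hrange : Kkᗮ = LinearMap.range (T : H →ₗ[ℝ] H) := by
    have hor : (LinearMap.range (T : H →ₗ[ℝ] H))ᗮ = Kk := by
      ext v
      rw [Submodule.mem_orthogonal]
      constructor
      · intro h
        have h2 : T v = 0 := by
          have h3 := h (T (T v)) (LinearMap.mem_range_self _ _)
          rw [sa_inner_symm hTsa (T v) v] at h3
          exact inner_self_eq_zero.mp h3
        exact LinearMap.mem_ker.mpr h2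
      · intro hv u hu
        obtain ⟨x, rfl⟩ := hu
        rw [ContinuousLinearMap.coe_coe, sa_inner_symm hTsa x v, hTker v hv, inner_zero_right]
    conv_lhs => rw [← hor]
    have hcl : IsClosed (LinearMap.range (T : H →ₗ[ℝ] H) : Set H) := hTf.2
    rw [Submodule.orthogonal_orthogonal_eq_closure,
      hcl.submodule_topologicalClosure_eq]
  have hTrangeperp : ∀ x, T x ∈ Kkᗮ := by
    intro x
    rw [hrange]
    exact LinearMap.mem_range_self _ _
  have hinj : LinearMap.ker ((T + P : H →L[ℝ] H) : H →ₗ[ℝ] H) = ⊥ := by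
    rw [LinearMap.ker_eq_bot']
    intro x hx
    have hx' : T x + P x = 0 := hx
    have hortho : inner ℝ (T x) (P x) = (0:ℝ) := by
      have h1 := hTrangeperp x
      rw [Submodule.mem_orthogonal] at h1
      rw [real_inner_comm]
      exact h1 (P x) (hPmem x)
    have hTx : T x = 0 := by
      have h2 : ‖T x‖ ^ 2 + inner ℝ (T x) (P x) = (0:ℝ) := by
        rw [← real_inner_self_eq_norm_sq, ← inner_add_right, hx', inner_zero_right]
      rw [hortho, add_zero] at h2
      have := sq_eq_zero_iff.mp h2
      exact norm_eq_zero.mp this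
    have hPx : P x = 0 := by rw [← hx', hTx, zero_add]
    have hxker : x ∈ Kk := LinearMap.mem_ker.mpr hTx
    rw [← hPid x hxker, hPx]
  have hsurj : LinearMap.range ((T + P : H →L[ℝ] H) : H →ₗ[ℝ] H) = ⊤ := by
    rw [LinearMap.range_eq_top]
    intro v
    have hw : v - P v ∈ Kkᗮ := by
      rw [hPapp]
      exact Submodule.sub_starProjection_mem_orthogonal (K := Kk) v
    rw [hrange] at hw
    obtain ⟨x, hx⟩ := hw
    refine ⟨x - P x + P v, ?_⟩
    have e1 : T (x - P x + P v) = T x := by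
      rw [map_add, map_sub, hTker _ (hPmem x), hTker _ (hPmem v), sub_zero, add_zero]
    have e2 : P (x - P x + P v) = P v := by
      rw [map_add, map_sub, hPid _ (hPmem x), hPid _ (hPmem v), sub_self, zero_add]
    have e3 : (T + P) (x - P x + P v) = T x + P v := by
      rw [ContinuousLinearMap.add_apply, e1, e2]
    rw [ContinuousLinearMap.coe_coe] at hx ⊢
    rw [e3, hx]
    abel
  have hAu : IsUnit (T + P) := by
    rw [ContinuousLinearMap.isUnit_iff_bijective]
    constructor
    · exact LinearMap.ker_eq_bot.mp hinj
    · exact LinearMap.range_eq_top.mp hsurj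
  have hAsa : IsSelfAdjoint (T + P) := hTsa.add hPsa
  have hAeq : IsEquivariant ρ (T + P) := hTeq.add hPeq
  obtain ⟨Q', M, hQ'sa, hQ'sq, hQ'eq, hMu, hMeq, hfac⟩ :=
    exists_symmetry_factor (T + P) hAu hAsa hAeq
  refine ⟨Q', hQ'sa, hQ'sq, hQ'eq, ?_⟩
  rw [mem_orbit_iff]
  refine ⟨M, -P, hMu, hMeq, hPc.neg, hPsa.neg, hPeq.neg, ?_⟩
  rw [hfac]
  abel



end AuxAll

theorem stmt5
    {H : Type*} [NormedAddCommGroup H] [InnerProductSpace ℝ H] [CompleteSpace H]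
    [TopologicalSpace.SeparableSpace H]
    {G : Type*} [Group G] [TopologicalSpace G] [IsTopologicalGroup G] [CompactSpace G]
    {EG : Type*} [NormedAddCommGroup EG] [NormedSpace ℝ EG]
    {HG : Type*} [TopologicalSpace HG] {IG : ModelWithCorners ℝ EG HG}
    [ChartedSpace HG G] [LieGroup IG (⊤ : ℕ∞) G]
    (ρ : G →* (H ≃ₗᵢ[ℝ] H)) (hρ : ∀ u : H, Continuous fun g : G => ρ g u)
    (Q : H →L[ℝ] H)
    (hQsa : IsSelfAdjoint Q) (hQsq : Q * Q = 1) (hQeq : IsEquivariant ρ Q) :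
    IsOpen (Subtype.val ⁻¹' cogredientOrbit ρ Q : Set (FSiG ρ)) ∧
    IsClosed (Subtype.val ⁻¹' cogredientOrbit ρ Q : Set (FSiG ρ)) ∧
    ∀ x : FSiG ρ, x ∈ Subtype.val ⁻¹' cogredientOrbit ρ Q →
      connectedComponent x ⊆ Subtype.val ⁻¹' cogredientOrbit ρ Q := by
  have hopen : ∀ (Q₀ : H →L[ℝ] H), IsSelfAdjoint Q₀ → Q₀ * Q₀ = 1 → IsEquivariant ρ Q₀ →
      IsOpen (Subtype.val ⁻¹' cogredientOrbit ρ Q₀ : Set (FSiG ρ)) := by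
    intro Q₀ h1 h2 h3
    rw [Metric.isOpen_iff]
    rintro ⟨T, hTmem⟩ hT
    obtain ⟨δ, hδ, hball⟩ := orbit_norm_open h1 h2 h3 hT
    refine ⟨δ, hδ, ?_⟩
    rintro ⟨T', hT'mem⟩ hd
    rw [Metric.mem_ball, Subtype.dist_eq, dist_eq_norm] at hd
    exact hball T' hT'mem.1 hT'mem.2.1 hd
  have hopenQ := hopen Q hQsa hQsq hQeq
  have hclosed : IsClosed (Subtype.val ⁻¹' cogredientOrbit ρ Q : Set (FSiG ρ)) := by
    rw [← isOpen_compl_iff, Metric.isOpen_iff]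
    rintro ⟨T, hTmem⟩ hT
    obtain ⟨Q', hQ'sa, hQ'sq, hQ'eq, hTQ'⟩ :=
      exists_orbit_symmetry hTmem.1 hTmem.2.1 hTmem.2.2.1
    obtain ⟨δ, hδ, hball⟩ := orbit_norm_open hQ'sa hQ'sq hQ'eq hTQ'
    refine ⟨δ, hδ, ?_⟩
    rintro ⟨T', hT'mem⟩ hd
    rw [Metric.mem_ball, Subtype.dist_eq, dist_eq_norm] at hd
    have hT'Q' : T' ∈ cogredientOrbit ρ Q' := hball T' hT'mem.1 hT'mem.2.1 hd
    simp only [Set.mem_compl_iff, Set.mem_preimage]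
    intro hmem
    have h5 : Q' ∈ cogredientOrbit ρ T' := orbit_symm hT'Q'
    have h6 : cogredientOrbit ρ T' ⊆ cogredientOrbit ρ Q := orbit_trans hmem
    have h8 : cogredientOrbit ρ Q' ⊆ cogredientOrbit ρ Q := orbit_trans (h6 h5)
    exact hT (h8 hTQ')
  exact ⟨hopenQ, hclosed, fun x hx =>
    IsClopen.connectedComponent_subset ⟨hclosed, hopenQ⟩ hx⟩
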